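/- Let λ be an n-partition. The map π ↦ Y_λ(π), restricted to S_n^λ, is a bijection from S_n^λ onto the set of all key tableaux of shape λ. -/

import Mathlib

/-
Common combinatorial set-up for "Tableaux for Key Polynomials, Demazure
Characters, and Atoms" (Proctor–Willis).

Conventions: a box `(j, i)` means column `j`, row `i`, both 1-indexed.
Partial (remnant) tableaux are encoded by their column-length functions
`c : ℕ → ℕ` (each column of a remnant is a top segment of the original
column), together with the ambient value function `T : ℕ → ℕ → ℕ`.
-/

open scoped BigOperators Classical

noncomputable section

namespace KeyPoly

open MvPolynomial

/-- An `n`-partition `λ = (λ_1, …, λ_n)` with `λ_1 ≥ … ≥ λ_n ≥ 0`,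
recorded as a function on `1, …, n`, vanishing beyond `n`. -/
structure NPartition (n : ℕ) where
  part : ℕ → ℕ
  antitone : ∀ ⦃i j : ℕ⦄, 1 ≤ i → i ≤ j → part j ≤ part i
  outside : ∀ i : ℕ, n < i → part i = 0

variable {n : ℕ}

/-- The column length `ζ_j` of the Young diagram of `λ`. -/
def zeta (lam : NPartition n) (j : ℕ) : ℕ :=
  ((Finset.Icc 1 n).filter fun i => j ≤ lam.part i).card

/-- The box `(j,i)` (column `j`, row `i`) belongs to the diagram of `λ`. -/
def InShape (lam : NPartition n) (j i : ℕ) : Prop :=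
  1 ≤ j ∧ 1 ≤ i ∧ i ≤ n ∧ j ≤ lam.part i

/-- The boxes of the diagram of `λ`, as a finite set of pairs (column, row). -/
def boxes (lam : NPartition n) : Finset (ℕ × ℕ) :=
  (Finset.Icc 1 (lam.part 1) ×ˢ Finset.Icc 1 n).filter fun b => b.1 ≤ lam.part b.2

/-- `T` is a semistandard tableau of shape `λ` with values in `[1,n]`:
rows weakly increase eastward, columns strictly increase southward. -/
def IsSSYT (lam : NPartition n) (T : ℕ → ℕ → ℕ) : Prop :=
  (∀ j i, InShape lam j i → 1 ≤ T j i ∧ T j i ≤ n) ∧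
  (∀ j i, InShape lam (j + 1) i → T j i ≤ T (j + 1) i) ∧
  (∀ j i, InShape lam j (i + 1) → T j i < T j (i + 1))

/-- Normalization: the filling vanishes outside the shape. -/
def ZeroOutside (lam : NPartition n) (T : ℕ → ℕ → ℕ) : Prop :=
  ∀ j i, ¬ InShape lam j i → T j i = 0

/-- `T(l, k+1)`, with the boundary convention `n+1` when `k = ζ_l`. -/
def south (lam : NPartition n) (T : ℕ → ℕ → ℕ) (l k : ℕ) : ℕ :=
  if InShape lam l (k + 1) then T l (k + 1) else n + 1

/-- `T(l+1, k)`, with the boundary convention `n` when `l = λ_k`. -/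
def east (lam : NPartition n) (T : ℕ → ℕ → ℕ) (l k : ℕ) : ℕ :=
  if InShape lam (l + 1) k then T (l + 1) k else n

/-- An `n`-permutation: a tuple `(p 1, …, p n)` of distinct entries from `[1,n]`. -/
def IsNPerm (n : ℕ) (p : ℕ → ℕ) : Prop :=
  Set.BijOn p (Set.Icc 1 n) (Set.Icc 1 n)

/-- The `λ`-key `Y_λ(π)`: column `j` is `π_1, …, π_{ζ_j}` sorted increasingly
(from top to bottom); zero outside the shape. -/
def keyTab (lam : NPartition n) (p : ℕ → ℕ) (j i : ℕ) : ℕ :=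
  if InShape lam j i then
    (((Finset.Icc 1 (zeta lam j)).image p).sort (· ≤ ·)).getD (i - 1) 0
  else 0

/-- A semistandard `T` is a key if the values of each column contain the
values of every column to its east. -/
def colSet (lam : NPartition n) (T : ℕ → ℕ → ℕ) (j : ℕ) : Finset ℕ :=
  (Finset.Icc 1 (zeta lam j)).image (T j)

def IsKey (lam : NPartition n) (T : ℕ → ℕ → ℕ) : Prop :=
  ∀ j j' : ℕ, 1 ≤ j → j ≤ j' → j' ≤ lam.part 1 → colSet lam T j' ⊆ colSet lam T j

/-! ### The (right) scanning method -/

/-- The next column of the scanning path: the earliest column `h' > h`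
(up to `maxCol`) whose column bottom in the remnant `c` is nonempty and has
value weakly larger than the bottom value of column `h`. -/
def nextCol (T : ℕ → ℕ → ℕ) (c : ℕ → ℕ) (maxCol h : ℕ) : Option ℕ :=
  (List.range' (h + 1) (maxCol - h)).find?
    (fun h' => decide (0 < c h' ∧ T h (c h) ≤ T h' (c h')))

/-- Columns of the scanning path (EWIS of column bottoms) starting at column `h`,
with explicit fuel. -/
def pathColsAux (T : ℕ → ℕ → ℕ) (c : ℕ → ℕ) (maxCol : ℕ) : ℕ → ℕ → List ℕ
  | 0, h => [h]
  | fuel + 1, h =>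
    match nextCol T c maxCol h with
    | none => [h]
    | some h' => h :: pathColsAux T c maxCol fuel h'

/-- Columns of the scanning path starting at the bottom of column `j` of the
remnant with column lengths `c`. -/
def pathCols (T : ℕ → ℕ → ℕ) (c : ℕ → ℕ) (maxCol j : ℕ) : List ℕ :=
  pathColsAux T c maxCol maxCol j

/-- Remove the scanning path starting in column `j` from the remnant `c`. -/
def removePath (T : ℕ → ℕ → ℕ) (c : ℕ → ℕ) (maxCol j : ℕ) : ℕ → ℕ :=
  fun h => if h ∈ pathCols T c maxCol j then c h - 1 else c h

/-- Iterate path removal `r` times, always starting from column `j`. -/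
def remnantIter (T : ℕ → ℕ → ℕ) (c0 : ℕ → ℕ) (maxCol j : ℕ) : ℕ → ℕ → ℕ
  | 0 => c0
  | r + 1 => removePath T (remnantIter T c0 maxCol j r) maxCol j

/-- Column lengths of the remnant tableau `T^{(j;i)}`. -/
def remnant (lam : NPartition n) (T : ℕ → ℕ → ℕ) (j i : ℕ) : ℕ → ℕ :=
  remnantIter T (zeta lam) (lam.part 1) j (zeta lam j - i)

/-- The scanning path `P(T; j, i)`, recorded by its list of columns. -/
def scanPath (lam : NPartition n) (T : ℕ → ℕ → ℕ) (j i : ℕ) : List ℕ :=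
  pathCols T (remnant lam T j i) (lam.part 1) j

/-- The scanning value `S(T; j, i)`: the last value of the EWIS from `(j,i)`. -/
def scanValue (lam : NPartition n) (T : ℕ → ℕ → ℕ) (j i : ℕ) : ℕ :=
  T ((scanPath lam T j i).getLastD j)
    (remnant lam T j i ((scanPath lam T j i).getLastD j))

/-- The box `(l,k)` lies on the scanning path `P(T; j, i)`. -/
def InScanPath (lam : NPartition n) (T : ℕ → ℕ → ℕ) (j i l k : ℕ) : Prop :=
  l ∈ scanPath lam T j i ∧ k = remnant lam T j i l

/-- `m(U)` where `U` is the remnant with column lengths `c` restricted to the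
columns `l+1, …, maxCol`:  the maximum of the column-bottom values, with the
convention `m((())) = 1` for the empty tableau. -/
def mEast (T : ℕ → ℕ → ℕ) (c : ℕ → ℕ) (maxCol l : ℕ) : ℕ :=
  max 1 (((Finset.Icc (l + 1) maxCol).filter fun h => 0 < c h).sup fun h => T h (c h))

/-! ### The condition sets A, C, and B -/

/-- The set `A_λ(T, π; l, k)`. -/
def Aset (lam : NPartition n) (T : ℕ → ℕ → ℕ) (p : ℕ → ℕ) (l k : ℕ) : Set ℕ :=
  if keyTab lam p l k < mEast T (remnant lam T l k) (lam.part 1) l then (∅ : Set ℕ)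
  else Set.Icc k (min (keyTab lam p l k) (min (south lam T l k - 1) (east lam T l k)))

/-- The set `C_λ(T, π; l, k)`. -/
def Cset (lam : NPartition n) (T : ℕ → ℕ → ℕ) (p : ℕ → ℕ) (l k : ℕ) : Set ℕ :=
  if l = lam.part 1 then {keyTab lam p l k}
  else if keyTab lam p l k < mEast T (remnant lam T l k) (lam.part 1) l then (∅ : Set ℕ)
  else if mEast T (remnant lam T l k) (lam.part 1) l = keyTab lam p l k then
    Set.Icc k (min (keyTab lam p l k) (min (south lam T l k - 1) (east lam T l k)))
  else {keyTab lam p l k} ∩ Set.Icc k (min (south lam T l k - 1) (east lam T l k))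

/-- The row index `a(l,k;j)`:  the `i` with `(l-1,k) ∈ P(T;j,i)`
(convention `a(l,k;l) = k`). -/
def aIdx (lam : NPartition n) (T : ℕ → ℕ → ℕ) (l k j : ℕ) : ℕ :=
  if j = l then k
  else ((Finset.Icc 1 (zeta lam j)).filter fun i => InScanPath lam T j i (l - 1) k).sup id

/-- The row index `b(l,k;j)`:  the `i` with `(l,k+1) ∈ P(T;j,i)` when `k < ζ_l`,
and `ζ_j + 1` when `k = ζ_l` (convention `b(l,k;l) = k+1`). -/
def bIdx (lam : NPartition n) (T : ℕ → ℕ → ℕ) (l k j : ℕ) : ℕ :=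
  if j = l then k + 1
  else if k = zeta lam l then zeta lam j + 1
  else ((Finset.Icc 1 (zeta lam j)).filter fun i => InScanPath lam T j i l (k + 1)).sup id

/-- `E(l,k;j,i)`:  the value of `T` at the box `(h,m)` of `P(T;j,i)` with `h < l`
maximal (convention `E(l,k;l,k) = k`). -/
def Epath (lam : NPartition n) (T : ℕ → ℕ → ℕ) (l k j i : ℕ) : ℕ :=
  if j = l then k
  else
    T (((scanPath lam T j i).filter fun h => decide (h < l)).foldr max 0)
      (remnant lam T j i (((scanPath lam T j i).filter fun h => decide (h < l)).foldr max 0))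

/-- The set `B_λ(T, π; l, k) = ⋂_{j=1}^{l} ⋃_{i=a(j)}^{b(j)-1} [E(l,k;j,i), Y_λ(π)(j,i)]`. -/
def Bset (lam : NPartition n) (T : ℕ → ℕ → ℕ) (p : ℕ → ℕ) (l k : ℕ) : Set ℕ :=
  {v | ∀ j, 1 ≤ j → j ≤ l →
    ∃ i, aIdx lam T l k j ≤ i ∧ i + 1 ≤ bIdx lam T l k j ∧
      Epath lam T l k j i ≤ v ∧ v ≤ keyTab lam p j i}

/-! ### The left scanning method -/

/-- The largest row `r ≤ c j` of column `j` whose value is at most `x`. -/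
def maxRow (T : ℕ → ℕ → ℕ) (c : ℕ → ℕ) (j x : ℕ) : ℕ :=
  ((Finset.Icc 1 (c j)).filter fun r => T j r ≤ x).sup id

/-- The rows of the maximizing weakly decreasing sequence through columns
`j, j-1, …, 1` with initial bound `x`, in a remnant with column lengths `c`. -/
def leftRows (T : ℕ → ℕ → ℕ) (c : ℕ → ℕ) : ℕ → ℕ → List ℕ
  | 0, _ => []
  | j + 1, x => maxRow T c (j + 1) x :: leftRows T c j (T (j + 1) (maxRow T c (j + 1) x))

/-- The column-1 value at the end of the left scanning path originating at `(j, r)`. -/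
def leftEndVal (T : ℕ → ℕ → ℕ) (c : ℕ → ℕ) (j r : ℕ) : ℕ :=
  T 1 ((leftRows T c j (T j r)).getLastD 0)

/-- Remove the left scanning path originating at `(l, c l)`, together with
all values beneath it, from the remnant `c`. -/
def leftRemovePath (T : ℕ → ℕ → ℕ) (c : ℕ → ℕ) (l : ℕ) : ℕ → ℕ :=
  fun j =>
    if 1 ≤ j ∧ j ≤ l then (leftRows T c l (T l (c l))).getD (l - j) 0 - 1 else c j

/-- Iterate left-path removal `r` times (always for column `l`). -/
def leftRemnantIter (T : ℕ → ℕ → ℕ) (c0 : ℕ → ℕ) (l : ℕ) : ℕ → ℕ → ℕ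
  | 0 => c0
  | r + 1 => leftRemovePath T (leftRemnantIter T c0 l r) l

/-- Column lengths of the left remnant used to compute `M(T; l, i)`:
`T` restricted to its first `l` columns with the left scanning paths
originating at `(l, ζ_l), …, (l, i+1)` (and everything beneath them) removed. -/
def leftRemnant (lam : NPartition n) (T : ℕ → ℕ → ℕ) (l i : ℕ) : ℕ → ℕ :=
  leftRemnantIter T (zeta lam) l (zeta lam l - i)

/-- The left scanning value `M(T; l, i)`. -/
def leftScanValue (lam : NPartition n) (T : ℕ → ℕ → ℕ) (l i : ℕ) : ℕ :=
  leftEndVal T (leftRemnant lam T l i) l i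

/-! ### The condition sets F and G -/

/-- The set `F_λ(T, σ; l, k)`. -/
def Fset (lam : NPartition n) (T : ℕ → ℕ → ℕ) (sg : ℕ → ℕ) (l k : ℕ) : Set ℕ :=
  if l = 1 then Set.Icc (keyTab lam sg 1 k) (south lam T 1 k - 1)
  else
    let U := leftRemnant lam T l k
    let q := maxRow T U (l - 1) (south lam T l k - 1)
    let P := (Finset.Icc 1 q).filter fun h => keyTab lam sg l k ≤ leftEndVal T U (l - 1) h
    if hP : P.Nonempty then Set.Icc (T (l - 1) (P.min' hP)) (south lam T l k - 1)
    else (∅ : Set ℕ)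

/-- The set `G_λ(T, σ; l, k)`. -/
def Gset (lam : NPartition n) (T : ℕ → ℕ → ℕ) (sg : ℕ → ℕ) (l k : ℕ) : Set ℕ :=
  if l = 1 then {keyTab lam sg 1 k}
  else
    let U := leftRemnant lam T l k
    let q := maxRow T U (l - 1) (south lam T l k - 1)
    let P := (Finset.Icc 1 q).filter fun h => leftEndVal T U (l - 1) h = keyTab lam sg l k
    if hP : P.Nonempty then
      Set.Icc (T (l - 1) (P.min' hP))
        (min ((if P.max' hP + 1 ≤ U (l - 1) then T (l - 1) (P.max' hP + 1) else n + 1) - 1)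
          (south lam T l k - 1))
    else (∅ : Set ℕ)

/-! ### Polynomials, divided differences, words -/

/-- Polynomials in the variables `X 1, …, X n` (indexed by `ℕ`) over `ℚ`. -/
abbrev Poly : Type := MvPolynomial ℕ ℚ

/-- The action of `s_i` on polynomials: interchange `x_i` and `x_{i+1}`. -/
def sOp (i : ℕ) (P : Poly) : Poly := rename (Equiv.swap i (i + 1)) P

/-- The divided difference operator
`ρ_i = (x_i - x_{i+1})⁻¹ ∘ (1 - s_i) ∘ x_i`, defined as the unique polynomial
`Q` with `(x_i - x_{i+1}) Q = x_i P - s_i (x_i P)`. -/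
def rhoOp (i : ℕ) (P : Poly) : Poly :=
  if h : ∃ Q : Poly, (X i - X (i + 1)) * Q = X i * P - sOp i (X i * P) then h.choose
  else 0

/-- The operator `ρ̄_i := ρ_i - 1`. -/
def rhoBarOp (i : ℕ) (P : Poly) : Poly := rhoOp i P - P

/-- Apply operators indexed by a word `[i_t, …, i_1]`, rightmost first:
`applyOps f [i_t, …, i_1] P = f i_t (⋯ (f i_1 P))`. -/
def applyOps (f : ℕ → Poly → Poly) : List ℕ → Poly → Poly
  | [], P => P
  | i :: w, P => f i (applyOps f w P)

/-- The monomial `x_1^{λ_1} ⋯ x_n^{λ_n}`. -/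
def lamMonomial (lam : NPartition n) : Poly :=
  ∏ i ∈ Finset.Icc 1 n, X i ^ lam.part i

/-- The weight monomial `x^T = ∏ x_i^{c_i}` of the filling `T`. -/
def weight (lam : NPartition n) (T : ℕ → ℕ → ℕ) : Poly :=
  ∏ b ∈ boxes lam, X (T b.1 b.2)

/-- The simple reflection `s_i` acting by value. -/
def swapVal (i v : ℕ) : ℕ := if v = i then i + 1 else if v = i + 1 then i else v

/-- The permutation `s_{i_t} ⋯ s_{i_1}.(1, 2, …, n)` obtained by applying the
word `w = [i_t, …, i_1]` (rightmost letter first, each acting by value) to the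
identity. -/
def permOfWord (w : List ℕ) : ℕ → ℕ := w.foldr (fun i f => swapVal i ∘ f) id

/-- `w` is a word in letters `s_1, …, s_{n-1}` producing `π` from `(1, …, n)`. -/
def WordFor (n : ℕ) (w : List ℕ) (p : ℕ → ℕ) : Prop :=
  (∀ i ∈ w, 1 ≤ i ∧ i + 1 ≤ n) ∧ ∀ t, 1 ≤ t → t ≤ n → permOfWord w t = p t

/-- `w` is a reduced word for `π`: it produces `π` with minimal length. -/
def IsReducedWord (n : ℕ) (w : List ℕ) (p : ℕ → ℕ) : Prop :=
  WordFor n w p ∧ ∀ w' : List ℕ, WordFor n w' p → w.length ≤ w'.length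

/-- The atom `c_λ(π;x) = ρ̄_{i_t} ⋯ ρ̄_{i_1} . x_1^{λ_1} ⋯ x_n^{λ_n}`, computed
from a choice of reduced word for `π` (it is independent of this choice). -/
def atomPoly (lam : NPartition n) (p : ℕ → ℕ) : Poly :=
  if h : ∃ w : List ℕ, IsReducedWord n w p then
    applyOps rhoBarOp h.choose (lamMonomial lam)
  else 0

/-! ### `S_n^λ` -/

/-- The set `Q_λ` of distinct column lengths of `λ`. -/
def Qset (lam : NPartition n) : Finset ℕ := (Finset.Icc 1 (lam.part 1)).image (zeta lam)

/-- `π ∈ S_n^λ`: an `n`-permutation increasing on each block `[q_{r-1}+1, q_r]`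
cut out by the column lengths of `λ` (equivalently, `π_i < π_j` whenever
`i < j` and no element of `Q_λ` lies in `[i, j)`). -/
def InSnLam (lam : NPartition n) (p : ℕ → ℕ) : Prop :=
  IsNPerm n p ∧ ∀ i j, 1 ≤ i → i < j → j ≤ n →
    (∀ q ∈ Qset lam, q < i ∨ j ≤ q) → p i < p j

end KeyPoly

namespace KeyPoly

/-- The `m`-th smallest element of a finset of naturals (0-indexed). -/
def nth (s : Finset ℕ) (m : ℕ) : ℕ := (s.sort (· ≤ ·)).getD m 0

lemma nth_mem {s : Finset ℕ} {m : ℕ} (h : m < s.card) : nth s m ∈ s := by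
  have hl : m < (s.sort (· ≤ ·)).length := by rwa [Finset.length_sort]
  rw [nth, List.getD_eq_getElem _ _ hl]
  exact (Finset.mem_sort _).1 (List.getElem_mem hl)

lemma nth_lt_nth {s : Finset ℕ} {m m' : ℕ} (h : m < m') (h' : m' < s.card) :
    nth s m < nth s m' := by
  have hl' : m' < (s.sort (· ≤ ·)).length := by rwa [Finset.length_sort]
  have hl : m < (s.sort (· ≤ ·)).length := lt_trans h hl'
  rw [nth, nth, List.getD_eq_getElem _ _ hl, List.getD_eq_getElem _ _ hl']
  exact (Finset.sortedLT_sort s).getElem_lt_getElem_iff.2 h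

lemma exists_nth {s : Finset ℕ} {x : ℕ} (hx : x ∈ s) : ∃ m, m < s.card ∧ nth s m = x := by
  have : x ∈ s.sort (· ≤ ·) := (Finset.mem_sort _).2 hx
  obtain ⟨m, hm, he⟩ := List.mem_iff_getElem.1 this
  exact ⟨m, by rwa [Finset.length_sort] at hm, by rw [nth, List.getD_eq_getElem _ _ hm, he]⟩

lemma filter_lt_nth {s : Finset ℕ} {m : ℕ} (h : m < s.card) :
    (s.filter (· < nth s m)).card = m := by
  classical
  have : s.filter (· < nth s m) = (Finset.range m).image (nth s) := by
    ext x
    simp only [Finset.mem_filter, Finset.mem_image, Finset.mem_range]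
    constructor
    · rintro ⟨hxs, hlt⟩
      obtain ⟨t, ht, rfl⟩ := exists_nth hxs
      refine ⟨t, ?_, rfl⟩
      by_contra hc
      push_neg at hc
      rcases eq_or_lt_of_le hc with rfl | hlt'
      · exact lt_irrefl _ hlt
      · exact absurd (nth_lt_nth hlt' ht) (by omega)
    · rintro ⟨t, ht, rfl⟩
      exact ⟨nth_mem (lt_trans ht h), nth_lt_nth ht h⟩
  rw [this, Finset.card_image_of_injOn, Finset.card_range]
  intro a ha b hb hab
  simp only [Finset.coe_range, Set.mem_Iio] at ha hb
  by_contra hne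
  rcases lt_or_gt_of_ne hne with hl | hl
  · exact absurd hab (ne_of_lt (nth_lt_nth hl (lt_trans hb h)))
  · exact absurd hab.symm (ne_of_lt (nth_lt_nth hl (lt_trans ha h)))

lemma nth_eq_iff {s : Finset ℕ} {m x : ℕ} (h : m < s.card) :
    nth s m = x ↔ x ∈ s ∧ (s.filter (· < x)).card = m := by
  classical
  constructor
  · rintro rfl; exact ⟨nth_mem h, filter_lt_nth h⟩
  · rintro ⟨hxs, hcard⟩
    obtain ⟨t, ht, rfl⟩ := exists_nth hxs
    rw [filter_lt_nth ht] at hcard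
    rw [hcard]

lemma nth_le_nth_of_subset {A B : Finset ℕ} {m : ℕ} (hAB : A ⊆ B) (h : m < A.card) :
    nth B m ≤ nth A m := by
  classical
  by_contra hc
  push_neg at hc
  have hB : m < B.card := lt_of_lt_of_le h (Finset.card_le_card hAB)
  have h1 : (B.filter (· < nth B m)).card = m := filter_lt_nth hB
  have h2 : (Finset.range (m + 1)).image (nth A) ⊆ B.filter (· < nth B m) := by
    intro x hx
    simp only [Finset.mem_image, Finset.mem_range] at hx
    obtain ⟨t, ht, rfl⟩ := hx
    have htA : t < A.card := lt_of_lt_of_le ht h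
    refine Finset.mem_filter.2 ⟨hAB (nth_mem htA), lt_of_le_of_lt ?_ hc⟩
    rcases eq_or_lt_of_le (Nat.lt_succ_iff.1 ht) with rfl | hlt
    · exact le_refl _
    · exact le_of_lt (nth_lt_nth hlt h)
  have h3 : m + 1 ≤ (B.filter (· < nth B m)).card := by
    calc m + 1 = (Finset.range (m+1)).card := (Finset.card_range _).symm
    _ = ((Finset.range (m + 1)).image (nth A)).card := by
        rw [Finset.card_image_of_injOn]
        intro a ha b hb hab
        simp only [Finset.coe_range, Set.mem_Iio, Nat.lt_succ_iff] at ha hb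
        by_contra hne
        rcases lt_or_gt_of_ne hne with hl | hl
        · exact absurd hab (ne_of_lt (nth_lt_nth hl (lt_of_le_of_lt hb h)))
        · exact absurd hab.symm (ne_of_lt (nth_lt_nth hl (lt_of_le_of_lt ha h)))
    _ ≤ _ := Finset.card_le_card h2
  omega

lemma image_nth {s : Finset ℕ} : (Finset.range s.card).image (nth s) = s := by
  classical
  ext x
  simp only [Finset.mem_image, Finset.mem_range]
  exact ⟨by rintro ⟨t, ht, rfl⟩; exact nth_mem ht, fun hx => by
    obtain ⟨m, hm, he⟩ := exists_nth hx; exact ⟨m, hm, he⟩⟩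

lemma nth_image_strictMonoOn {s : Finset ℕ} {f : ℕ → ℕ} {m : ℕ}
    (hf : Set.InjOn f ↑s) (hmono : ∀ a ∈ s, ∀ b ∈ s, a < b → f a < f b)
    (h : m < s.card) : nth (s.image f) m = f (nth s m) := by
  classical
  have hcard : (s.image f).card = s.card := Finset.card_image_of_injOn hf
  rw [nth_eq_iff (by omega)]
  refine ⟨Finset.mem_image_of_mem f (nth_mem h), ?_⟩
  have : (s.image f).filter (· < f (nth s m)) = (s.filter (· < nth s m)).image f := by
    ext y
    simp only [Finset.mem_filter, Finset.mem_image]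
    constructor
    · rintro ⟨⟨a, ha, rfl⟩, hlt⟩
      refine ⟨a, ⟨ha, ?_⟩, rfl⟩
      by_contra hge
      push_neg at hge
      rcases eq_or_lt_of_le hge with he | hlt'
      · rw [← he] at hlt; exact lt_irrefl _ hlt
      · exact absurd (hmono _ (nth_mem h) _ ha hlt') (by omega)
    · rintro ⟨a, ha, rfl⟩
      obtain ⟨has, halt⟩ := ha
      exact ⟨⟨a, has, rfl⟩, hmono _ has _ (nth_mem h) halt⟩
  rw [this, Finset.card_image_of_injOn (hf.mono (fun x hx => by
    simp only [Finset.coe_filter, Set.mem_setOf_eq] at hx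
    exact Finset.mem_coe.2 hx.1)), filter_lt_nth h]

lemma nth_Ioc {d u m : ℕ} (h : m < u - d) : nth (Finset.Ioc d u) m = d + 1 + m := by
  classical
  have hc : (Finset.Ioc d u).card = u - d := Nat.card_Ioc d u
  rw [nth_eq_iff (by omega)]
  constructor
  · simp only [Finset.mem_Ioc]; omega
  · have : (Finset.Ioc d u).filter (· < d + 1 + m) = Finset.Ioc d (d + m) := by
      ext x
      simp only [Finset.mem_filter, Finset.mem_Ioc]
      omega
    rw [this, Nat.card_Ioc]
    omega

section Chunk2
open Finset
variable {n : ℕ}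

lemma zeta_le (lam : NPartition n) (j : ℕ) : zeta lam j ≤ n := by
  have := Finset.card_filter_le (Finset.Icc 1 n) (fun i => j ≤ lam.part i)
  have hz : zeta lam j = ((Finset.Icc 1 n).filter fun i => j ≤ lam.part i).card := rfl
  rw [Nat.card_Icc] at this
  omega

lemma zeta_antitone (lam : NPartition n) {j j' : ℕ} (h : j ≤ j') :
    zeta lam j' ≤ zeta lam j := by
  apply Finset.card_le_card
  intro x hx
  rw [Finset.mem_filter] at hx ⊢
  exact ⟨hx.1, le_trans h hx.2⟩

lemma le_zeta_iff (lam : NPartition n) {i j : ℕ} (hi : 1 ≤ i) (hj : 1 ≤ j) :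
    i ≤ zeta lam j ↔ i ≤ n ∧ j ≤ lam.part i := by
  constructor
  · intro h
    have hn' : i ≤ n := le_trans h (zeta_le lam j)
    refine ⟨hn', ?_⟩
    by_contra hc
    push_neg at hc
    have hsub : (Finset.Icc 1 n).filter (fun x => j ≤ lam.part x) ⊆ Finset.Icc 1 (i - 1) := by
      intro x hx
      rw [Finset.mem_filter, Finset.mem_Icc] at hx
      rw [Finset.mem_Icc]
      refine ⟨hx.1.1, ?_⟩
      by_contra hxc
      push_neg at hxc
      have : lam.part x ≤ lam.part i := lam.antitone hi (by omega)
      omega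
    have := Finset.card_le_card hsub
    rw [Nat.card_Icc] at this
    have hz : zeta lam j = ((Finset.Icc 1 n).filter (fun x => j ≤ lam.part x)).card := rfl
    omega
  · rintro ⟨hin, hji⟩
    have hsub : Finset.Icc 1 i ⊆ (Finset.Icc 1 n).filter (fun x => j ≤ lam.part x) := by
      intro x hx
      rw [Finset.mem_Icc] at hx
      rw [Finset.mem_filter, Finset.mem_Icc]
      exact ⟨⟨hx.1, le_trans hx.2 hin⟩, le_trans hji (lam.antitone hx.1 hx.2)⟩
    have := Finset.card_le_card hsub
    rw [Nat.card_Icc] at this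
    have hz : zeta lam j = ((Finset.Icc 1 n).filter (fun x => j ≤ lam.part x)).card := rfl
    omega

lemma inShape_iff (lam : NPartition n) {i j : ℕ} (hj : 1 ≤ j) (hi : 1 ≤ i) :
    InShape lam j i ↔ i ≤ zeta lam j := by
  rw [le_zeta_iff lam hi hj, InShape]
  tauto

lemma inShape_j_le (lam : NPartition n) {i j : ℕ} (h : InShape lam j i) :
    j ≤ lam.part 1 := le_trans h.2.2.2 (lam.antitone le_rfl h.2.1)

/-- Strict increase down a column of a semistandard tableau. -/
lemma col_strictMono {lam : NPartition n} {T : ℕ → ℕ → ℕ} (hT : IsSSYT lam T)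
    {j i i' : ℕ} (hj : 1 ≤ j) (h1 : 1 ≤ i) (h : i < i') (h' : i' ≤ zeta lam j) :
    T j i < T j i' := by
  have key : ∀ m : ℕ, ∀ i : ℕ, 1 ≤ i → i + m + 1 ≤ zeta lam j → T j i < T j (i + m + 1) := by
    intro m
    induction m with
    | zero =>
      intro i h1 h2
      exact hT.2.2 j i ((inShape_iff lam hj (by omega)).2 (by omega))
    | succ m ih =>
      intro i h1 h2
      have step : T j (i + m + 1) < T j (i + m + 1 + 1) :=
        hT.2.2 j (i + m + 1) ((inShape_iff lam hj (by omega)).2 (by omega))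
      have hih := ih i h1 (by omega)
      have he : i + (m + 1) + 1 = i + m + 1 + 1 := by omega
      rw [he]
      omega
  have := key (i' - i - 1) i h1 (by omega)
  have he : i' = i + (i' - i - 1) + 1 := by omega
  rw [he]
  exact this

lemma colSet_card {lam : NPartition n} {T : ℕ → ℕ → ℕ} (hT : IsSSYT lam T)
    {j : ℕ} (hj : 1 ≤ j) : (colSet lam T j).card = zeta lam j := by
  rw [colSet, Finset.card_image_of_injOn, Nat.card_Icc]
  · omega
  · intro a ha b hb hab
    simp only [Finset.coe_Icc, Set.mem_Icc] at ha hb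
    by_contra hne
    rcases lt_or_gt_of_ne hne with hl | hl
    · exact absurd hab (ne_of_lt (col_strictMono hT hj ha.1 hl hb.2))
    · exact absurd hab.symm (ne_of_lt (col_strictMono hT hj hb.1 hl ha.2))

lemma mem_colSet_bounds {lam : NPartition n} {T : ℕ → ℕ → ℕ} (hT : IsSSYT lam T)
    {j : ℕ} (hj : 1 ≤ j) (hjl : j ≤ lam.part 1) {x : ℕ} (hx : x ∈ colSet lam T j) :
    x ∈ Finset.Icc 1 n := by
  rw [colSet, Finset.mem_image] at hx
  obtain ⟨i, hi, rfl⟩ := hx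
  rw [Finset.mem_Icc] at hi
  have hsh : InShape lam j i := (inShape_iff lam hj hi.1).2 hi.2
  have := hT.1 j i hsh
  rw [Finset.mem_Icc]
  exact this

lemma nth_colSet {lam : NPartition n} {T : ℕ → ℕ → ℕ} (hT : IsSSYT lam T)
    {j i : ℕ} (hj : 1 ≤ j) (hi : 1 ≤ i) (hiz : i ≤ zeta lam j) :
    nth (colSet lam T j) (i - 1) = T j i := by
  classical
  have hcard : (colSet lam T j).card = zeta lam j := colSet_card hT hj
  rw [nth_eq_iff (by omega)]
  constructor
  · rw [colSet, Finset.mem_image]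
    exact ⟨i, Finset.mem_Icc.2 ⟨hi, hiz⟩, rfl⟩
  · have heq : (colSet lam T j).filter (· < T j i) = (Finset.Icc 1 (i - 1)).image (T j) := by
      ext y
      simp only [Finset.mem_filter, Finset.mem_image, colSet, Finset.mem_Icc]
      constructor
      · rintro ⟨⟨a, ha, rfl⟩, hlt⟩
        refine ⟨a, ⟨ha.1, ?_⟩, rfl⟩
        by_contra hc
        push_neg at hc
        rcases eq_or_lt_of_le (show i ≤ a by omega) with rfl | hlt'
        · exact lt_irrefl _ hlt
        · exact absurd (col_strictMono hT hj hi hlt' ha.2) (by omega)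
      · rintro ⟨a, ha, rfl⟩
        exact ⟨⟨a, ⟨ha.1, by omega⟩, rfl⟩, col_strictMono hT hj ha.1 (by omega) hiz⟩
    rw [heq, Finset.card_image_of_injOn, Nat.card_Icc]
    · omega
    · intro a ha b hb hab
      simp only [Finset.coe_Icc, Set.mem_Icc] at ha hb
      by_contra hne
      rcases lt_or_gt_of_ne hne with hl | hl
      · exact absurd hab (ne_of_lt (col_strictMono hT hj ha.1 hl (by omega)))
      · exact absurd hab.symm (ne_of_lt (col_strictMono hT hj hb.1 hl (by omega)))

end Chunk2

section Chunk3
variable {n : ℕ}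

/-- The image of `{1,…,q}` under `p`. -/
def imageSet (p : ℕ → ℕ) (q : ℕ) : Finset ℕ := (Finset.Icc 1 q).image p

lemma injOn_Icc {p : ℕ → ℕ} (hp : IsNPerm n p) {q : ℕ} (hq : q ≤ n) :
    Set.InjOn p ↑(Finset.Icc 1 q) := by
  refine hp.injOn.mono ?_
  rw [Finset.coe_Icc]
  exact Set.Icc_subset_Icc_right (by exact_mod_cast hq)

lemma card_imageSet {p : ℕ → ℕ} (hp : IsNPerm n p) {q : ℕ} (hq : q ≤ n) :
    (imageSet p q).card = q := by
  rw [imageSet, Finset.card_image_of_injOn (injOn_Icc hp hq), Nat.card_Icc]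
  omega

lemma imageSet_subset_Icc {p : ℕ → ℕ} (hp : IsNPerm n p) {q : ℕ} (hq : q ≤ n) :
    imageSet p q ⊆ Finset.Icc 1 n := by
  intro x hx
  rw [imageSet, Finset.mem_image] at hx
  obtain ⟨a, ha, rfl⟩ := hx
  rw [Finset.mem_Icc] at ha
  have : p a ∈ Set.Icc 1 n := hp.mapsTo ⟨ha.1, le_trans ha.2 hq⟩
  rw [Finset.mem_Icc]
  exact this

lemma imageSet_mono (p : ℕ → ℕ) {q q' : ℕ} (h : q ≤ q') :
    imageSet p q ⊆ imageSet p q' :=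
  Finset.image_subset_image (Finset.Icc_subset_Icc_right h)

lemma imageSet_n {p : ℕ → ℕ} (hp : IsNPerm n p) : imageSet p n = Finset.Icc 1 n := by
  apply Finset.eq_of_subset_of_card_le (imageSet_subset_Icc hp le_rfl)
  rw [card_imageSet hp le_rfl, Nat.card_Icc]
  omega

lemma keyTab_eq_nth {lam : NPartition n} {p : ℕ → ℕ} {j i : ℕ} (hsh : InShape lam j i) :
    keyTab lam p j i = nth (imageSet p (zeta lam j)) (i - 1) := by
  rw [keyTab, if_pos hsh]
  rfl

lemma keyTab_zero {lam : NPartition n} {p : ℕ → ℕ} {j i : ℕ} (hsh : ¬ InShape lam j i) :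
    keyTab lam p j i = 0 := by
  rw [keyTab, if_neg hsh]

lemma keyTab_ssyt {lam : NPartition n} {p : ℕ → ℕ} (hp : IsNPerm n p) :
    IsSSYT lam (keyTab lam p) := by
  have bounds : ∀ j i, InShape lam j i → 1 ≤ keyTab lam p j i ∧ keyTab lam p j i ≤ n := by
    intro j i hsh
    obtain ⟨hj, hi, hin, hji⟩ := hsh
    have hiz : i ≤ zeta lam j := (inShape_iff lam hj hi).1 ⟨hj, hi, hin, hji⟩
    rw [keyTab_eq_nth ⟨hj, hi, hin, hji⟩]
    have hcard : (imageSet p (zeta lam j)).card = zeta lam j := card_imageSet hp (zeta_le lam j)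
    have hmem : nth (imageSet p (zeta lam j)) (i - 1) ∈ imageSet p (zeta lam j) :=
      nth_mem (by omega)
    have := imageSet_subset_Icc hp (zeta_le lam j) hmem
    rw [Finset.mem_Icc] at this
    exact this
  refine ⟨bounds, ?_, ?_⟩
  · intro j i hsh'
    rcases Nat.eq_zero_or_pos j with rfl | hj
    · rw [keyTab_zero (fun h => by exact absurd h.1 (by omega))]
      omega
    · have hi : 1 ≤ i := hsh'.2.1
      have hiz' : i ≤ zeta lam (j + 1) := (inShape_iff lam (by omega) hi).1 hsh'
      have hiz : i ≤ zeta lam j := le_trans hiz' (zeta_antitone lam (by omega))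
      have hsh : InShape lam j i := (inShape_iff lam hj hi).2 hiz
      rw [keyTab_eq_nth hsh, keyTab_eq_nth hsh']
      refine nth_le_nth_of_subset (imageSet_mono p (zeta_antitone lam (by omega))) ?_
      rw [card_imageSet hp (zeta_le lam (j + 1))]
      omega
  · intro j i hsh'
    have hj : 1 ≤ j := hsh'.1
    have hiz' : i + 1 ≤ zeta lam j := (inShape_iff lam hj (by omega)).1 hsh'
    rcases Nat.eq_zero_or_pos i with rfl | hi
    · rw [keyTab_zero (fun h => by exact absurd h.2.1 (by omega))]
      have := (bounds j 1 hsh').1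
      simp only [Nat.zero_add]
      omega
    · have hsh : InShape lam j i := (inShape_iff lam hj hi).2 (by omega)
      rw [keyTab_eq_nth hsh, keyTab_eq_nth hsh']
      refine nth_lt_nth (by omega) ?_
      rw [card_imageSet hp (zeta_le lam j)]
      omega

lemma colSet_keyTab {lam : NPartition n} {p : ℕ → ℕ} (hp : IsNPerm n p) {j : ℕ} (hj : 1 ≤ j) :
    colSet lam (keyTab lam p) j = imageSet p (zeta lam j) := by
  have hcard : (imageSet p (zeta lam j)).card = zeta lam j := card_imageSet hp (zeta_le lam j)
  ext x
  rw [colSet, Finset.mem_image]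
  constructor
  · rintro ⟨i, hi, rfl⟩
    rw [Finset.mem_Icc] at hi
    rw [keyTab_eq_nth ((inShape_iff lam hj hi.1).2 hi.2)]
    exact nth_mem (by omega)
  · intro hx
    obtain ⟨m, hm, he⟩ := exists_nth hx
    refine ⟨m + 1, Finset.mem_Icc.2 ⟨by omega, by omega⟩, ?_⟩
    rw [keyTab_eq_nth ((inShape_iff lam hj (by omega)).2 (by omega))]
    simpa using he

lemma keyTab_isKey {lam : NPartition n} {p : ℕ → ℕ} (hp : IsNPerm n p) :
    IsKey lam (keyTab lam p) := by
  intro j j' hj hjj' _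
  rw [colSet_keyTab hp hj, colSet_keyTab hp (le_trans hj hjj')]
  exact imageSet_mono p (zeta_antitone lam hjj')

lemma keyTab_zeroOutside (lam : NPartition n) (p : ℕ → ℕ) :
    ZeroOutside lam (keyTab lam p) :=
  fun _ _ h => keyTab_zero h

end Chunk3

section Chunk4
variable {n : ℕ}

lemma mem_Qset {lam : NPartition n} {q : ℕ} :
    q ∈ Qset lam ↔ ∃ j, 1 ≤ j ∧ j ≤ lam.part 1 ∧ zeta lam j = q := by
  rw [Qset, Finset.mem_image]
  constructor
  · rintro ⟨j, hj, rfl⟩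
    rw [Finset.mem_Icc] at hj
    exact ⟨j, hj.1, hj.2, rfl⟩
  · rintro ⟨j, h1, h2, rfl⟩
    exact ⟨j, Finset.mem_Icc.2 ⟨h1, h2⟩, rfl⟩

lemma Qset_pos {lam : NPartition n} (hn : 1 ≤ n) {q : ℕ} (hq : q ∈ Qset lam) : 1 ≤ q := by
  obtain ⟨j, h1, h2, rfl⟩ := mem_Qset.1 hq
  exact (le_zeta_iff lam le_rfl h1).2 ⟨hn, h2⟩

lemma Qset_le_n {lam : NPartition n} {q : ℕ} (hq : q ∈ Qset lam) : q ≤ n := by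
  obtain ⟨j, _, _, rfl⟩ := mem_Qset.1 hq
  exact zeta_le lam j

/-- The easternmost column of length `q` (junk if `q ∉ Q`). -/
def colOf (lam : NPartition n) (q : ℕ) : ℕ :=
  ((Finset.Icc 1 (lam.part 1)).filter fun j => zeta lam j = q).sup id

lemma colOf_spec {lam : NPartition n} {q : ℕ} (hq : q ∈ Qset lam) :
    1 ≤ colOf lam q ∧ colOf lam q ≤ lam.part 1 ∧ zeta lam (colOf lam q) = q := by
  obtain ⟨j, h1, h2, h3⟩ := mem_Qset.1 hq
  have hne : (((Finset.Icc 1 (lam.part 1)).filter fun j => zeta lam j = q)).Nonempty :=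
    ⟨j, Finset.mem_filter.2 ⟨Finset.mem_Icc.2 ⟨h1, h2⟩, h3⟩⟩
  obtain ⟨b, hb, he⟩ := Finset.exists_mem_eq_sup _ hne id
  rw [Finset.mem_filter, Finset.mem_Icc] at hb
  rw [colOf, he]
  exact ⟨hb.1.1, hb.1.2, hb.2⟩

/-- The chain of relevant cardinalities. -/
def InChain (lam : NPartition n) (q : ℕ) : Prop := q = 0 ∨ q = n ∨ q ∈ Qset lam

/-- Column set of the column of length `q`, or `{1,…,q}` when `q ∉ Q`. -/
def Vset (lam : NPartition n) (K : ℕ → ℕ → ℕ) (q : ℕ) : Finset ℕ :=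
  if q ∈ Qset lam then colSet lam K (colOf lam q) else Finset.Icc 1 q

def upB (lam : NPartition n) (i : ℕ) : ℕ := sInf ({q | q ∈ Qset lam ∧ i ≤ q} ∪ {n})
def downB (lam : NPartition n) (i : ℕ) : ℕ := sSup ({q | q ∈ Qset lam ∧ q < i} ∪ {0})

/-- The inverse of the `λ`-key map. -/
def invKey (lam : NPartition n) (K : ℕ → ℕ → ℕ) (i : ℕ) : ℕ :=
  if 1 ≤ i ∧ i ≤ n then
    nth (Vset lam K (upB lam i) \ Vset lam K (downB lam i)) (i - downB lam i - 1)
  else i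

lemma downB_bddAbove (lam : NPartition n) (i : ℕ) :
    BddAbove ({q | q ∈ Qset lam ∧ q < i} ∪ {0}) := by
  refine ⟨n, ?_⟩
  rintro x (hx | hx)
  · exact Qset_le_n hx.1
  · simp only [Set.mem_singleton_iff] at hx
    omega

lemma downB_mem (lam : NPartition n) (i : ℕ) :
    (downB lam i ∈ Qset lam ∧ downB lam i < i) ∨ downB lam i = 0 := by
  have := Nat.sSup_mem (s := {q | q ∈ Qset lam ∧ q < i} ∪ {0}) ⟨0, Or.inr rfl⟩
    (downB_bddAbove lam i)
  rcases this with h | h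
  · exact Or.inl h
  · exact Or.inr h

lemma le_downB {lam : NPartition n} {q i : ℕ} (hq : q ∈ Qset lam) (h : q < i) :
    q ≤ downB lam i :=
  le_csSup (downB_bddAbove lam i) (Or.inl ⟨hq, h⟩)

lemma downB_lt_self {lam : NPartition n} {i : ℕ} (hi : 1 ≤ i) : downB lam i < i := by
  rcases downB_mem lam i with h | h
  · exact h.2
  · omega

lemma downB_inChain (lam : NPartition n) (i : ℕ) : InChain lam (downB lam i) := by
  rcases downB_mem lam i with h | h
  · exact Or.inr (Or.inr h.1)
  · exact Or.inl h

lemma upB_mem (lam : NPartition n) (i : ℕ) :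
    (upB lam i ∈ Qset lam ∧ i ≤ upB lam i) ∨ upB lam i = n := by
  have := Nat.sInf_mem (s := {q | q ∈ Qset lam ∧ i ≤ q} ∪ {n}) ⟨n, Or.inr rfl⟩
  rcases this with h | h
  · exact Or.inl h
  · exact Or.inr h

lemma upB_le {lam : NPartition n} {q i : ℕ} (hq : q ∈ Qset lam) (h : i ≤ q) :
    upB lam i ≤ q :=
  Nat.sInf_le (Or.inl ⟨hq, h⟩)

lemma upB_le_n (lam : NPartition n) (i : ℕ) : upB lam i ≤ n :=
  Nat.sInf_le (Or.inr rfl)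

lemma le_upB {lam : NPartition n} {i : ℕ} (hi : i ≤ n) : i ≤ upB lam i := by
  rcases upB_mem lam i with h | h
  · exact h.2
  · omega

lemma upB_inChain (lam : NPartition n) (i : ℕ) : InChain lam (upB lam i) := by
  rcases upB_mem lam i with h | h
  · exact Or.inr (Or.inr h.1)
  · exact Or.inr (Or.inl h)

/-- Within the block `(downB q, q]` of a chain element `q`, `upB` is constantly `q`. -/
lemma upB_eq {lam : NPartition n} {q i : ℕ} (hq : q ∈ Qset lam ∨ q = n)
    (h1 : downB lam q < i) (h2 : i ≤ q) : upB lam i = q := by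
  have hle : upB lam i ≤ q := by
    rcases hq with hq | rfl
    · exact upB_le hq h2
    · exact upB_le_n lam i
  have hge : q ≤ upB lam i := by
    by_contra hc
    push_neg at hc
    rcases upB_mem lam i with h | h
    · have : upB lam i ≤ downB lam q := le_downB h.1 hc
      omega
    · have : q ≤ n := by
        rcases hq with hq | rfl
        · exact Qset_le_n hq
        · exact le_rfl
      omega
  omega

lemma downB_eq {lam : NPartition n} {q i : ℕ} (h1 : downB lam q < i) (h2 : i ≤ q) :
    downB lam i = downB lam q := by
  have hge : downB lam q ≤ downB lam i := by
    rcases downB_mem lam q with h | h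
    · exact le_downB h.1 (by omega)
    · omega
  have hle : downB lam i ≤ downB lam q := by
    rcases downB_mem lam i with h | h
    · exact le_downB h.1 (by omega)
    · omega
  omega

end Chunk4

section Chunk5
variable {n : ℕ} {lam : NPartition n} {K : ℕ → ℕ → ℕ}

lemma card_Vset (hT : IsSSYT lam K) (q : ℕ) : (Vset lam K q).card = q := by
  rw [Vset]
  split_ifs with h
  · obtain ⟨h1, _, h3⟩ := colOf_spec h
    rw [colSet_card hT h1, h3]
  · rw [Nat.card_Icc]; omega

lemma Vset_zero (hn : 1 ≤ n) : Vset lam K 0 = ∅ := by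
  rw [Vset, if_neg (fun h => by have := Qset_pos hn h; omega)]
  simp

lemma Vset_subset_Icc (hT : IsSSYT lam K) {q : ℕ} (hq : q ≤ n) :
    Vset lam K q ⊆ Finset.Icc 1 n := by
  rw [Vset]
  split_ifs with h
  · intro x hx
    exact mem_colSet_bounds hT (colOf_spec h).1 (colOf_spec h).2.1 hx
  · exact Finset.Icc_subset_Icc_right hq

lemma Vset_n (hT : IsSSYT lam K) : Vset lam K n = Finset.Icc 1 n := by
  by_cases h : n ∈ Qset lam
  · apply Finset.eq_of_subset_of_card_le (Vset_subset_Icc hT le_rfl)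
    rw [card_Vset hT, Nat.card_Icc]
    omega
  · rw [Vset, if_neg h]

lemma Vset_subset (hT : IsSSYT lam K) (hK : IsKey lam K) (hn : 1 ≤ n) {d u : ℕ}
    (hd : InChain lam d) (hu : InChain lam u) (hdu : d ≤ u) :
    Vset lam K d ⊆ Vset lam K u := by
  rcases hd with rfl | hdn | hdQ
  · rw [Vset_zero hn]
    exact Finset.empty_subset _
  · have hun : u = n := by
      rcases hu with rfl | rfl | h
      · omega
      · rfl
      · have := Qset_le_n h; omega
    rw [hdn, hun]
  · rcases hu with rfl | rfl | huQ
    · have := Qset_pos hn hdQ; omega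
    · rw [Vset_n hT]
      exact Vset_subset_Icc hT (Qset_le_n hdQ)
    · rcases eq_or_lt_of_le hdu with rfl | hlt
      · exact subset_rfl
      · obtain ⟨hd1, hd2, hd3⟩ := colOf_spec hdQ
        obtain ⟨hu1, hu2, hu3⟩ := colOf_spec huQ
        have hc : colOf lam u < colOf lam d := by
          by_contra hc
          push_neg at hc
          have := zeta_antitone lam hc
          omega
        rw [Vset, if_pos hdQ, Vset, if_pos huQ]
        exact hK (colOf lam u) (colOf lam d) hu1 (le_of_lt hc) hd2

lemma colSet_eq_of_zeta_eq (hT : IsSSYT lam K) (hK : IsKey lam K) {j j' : ℕ}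
    (hj : 1 ≤ j) (hj' : 1 ≤ j') (hl : j ≤ lam.part 1) (hl' : j' ≤ lam.part 1)
    (hz : zeta lam j = zeta lam j') : colSet lam K j = colSet lam K j' := by
  rcases le_total j j' with h | h
  · exact (Finset.eq_of_subset_of_card_le (hK j j' hj h hl')
      (by rw [colSet_card hT hj, colSet_card hT hj', hz])).symm
  · exact Finset.eq_of_subset_of_card_le (hK j' j hj' h hl)
      (by rw [colSet_card hT hj, colSet_card hT hj', hz])

lemma Vset_zeta (hT : IsSSYT lam K) (hK : IsKey lam K) {j : ℕ}
    (hj : 1 ≤ j) (hl : j ≤ lam.part 1) : Vset lam K (zeta lam j) = colSet lam K j := by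
  have hQ : zeta lam j ∈ Qset lam := mem_Qset.2 ⟨j, hj, hl, rfl⟩
  rw [Vset, if_pos hQ]
  exact colSet_eq_of_zeta_eq hT hK (colOf_spec hQ).1 hj (colOf_spec hQ).2.1 hl
    (colOf_spec hQ).2.2

/-- `invKey` on a block, in terms of the block's chain bounds. -/
lemma invKey_block {q i : ℕ} (hq : q ∈ Qset lam ∨ q = n) (h1 : downB lam q < i)
    (h2 : i ≤ q) (hqn : q ≤ n) :
    invKey lam K i =
      nth (Vset lam K q \ Vset lam K (downB lam q)) (i - downB lam q - 1) := by
  rw [invKey, if_pos ⟨by omega, by omega⟩, upB_eq hq h1 h2, downB_eq h1 h2]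

/-- The central induction: the first `q` values of `invKey` biject onto `Vset q`,
for every `q` in the chain. -/
lemma imageSet_invKey (hn : 1 ≤ n) (hT : IsSSYT lam K) (hK : IsKey lam K) :
    ∀ q, InChain lam q → imageSet (invKey lam K) q = Vset lam K q := by
  intro q
  induction q using Nat.strong_induction_on with
  | _ q ih =>
    intro hq
    rcases Nat.eq_zero_or_pos q with rfl | hq1
    · rw [Vset_zero hn]
      simp [imageSet]
    · have hq' : q ∈ Qset lam ∨ q = n := by
        rcases hq with rfl | rfl | h
        · omega
        · exact Or.inr rfl
        · exact Or.inl h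
      have hqn : q ≤ n := by
        rcases hq' with h | rfl
        · exact Qset_le_n h
        · exact le_rfl
      set d := downB lam q with hd
      have hdlt : d < q := downB_lt_self hq1
      have hdchain : InChain lam d := downB_inChain lam q
      have hIH : imageSet (invKey lam K) d = Vset lam K d := ih d hdlt hdchain
      have hVsub : Vset lam K d ⊆ Vset lam K q :=
        Vset_subset hT hK hn hdchain hq (le_of_lt hdlt)
      have hcardD : (Vset lam K q \ Vset lam K d).card = q - d := by
        rw [Finset.card_sdiff_of_subset hVsub, card_Vset hT, card_Vset hT]
      have himg : (Finset.Ioc d q).image (invKey lam K) = Vset lam K q \ Vset lam K d := by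
        ext x
        simp only [Finset.mem_image, Finset.mem_Ioc]
        constructor
        · rintro ⟨i, ⟨h1, h2⟩, rfl⟩
          rw [invKey_block hq' h1 h2 hqn]
          exact nth_mem (by omega)
        · intro hx
          obtain ⟨m, hm, he⟩ := exists_nth hx
          rw [hcardD] at hm
          refine ⟨d + 1 + m, ⟨by omega, by omega⟩, ?_⟩
          rw [invKey_block hq' (by omega) (by omega) hqn,
            show d + 1 + m - d - 1 = m by omega]
          exact he
      have hsplit : Finset.Icc 1 q = Finset.Icc 1 d ∪ Finset.Ioc d q := by
        ext x
        simp only [Finset.mem_union, Finset.mem_Icc, Finset.mem_Ioc]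
        omega
      rw [imageSet] at hIH ⊢
      rw [hsplit, Finset.image_union, hIH, himg, Finset.union_sdiff_of_subset hVsub]

end Chunk5

section Chunk6
variable {n : ℕ} {lam : NPartition n} {K : ℕ → ℕ → ℕ}

lemma chain_of {q : ℕ} (h : q ∈ Qset lam ∨ q = n) : InChain lam q := by
  rcases h with h | rfl
  · exact Or.inr (Or.inr h)
  · exact Or.inr (Or.inl rfl)

lemma invKey_mem_Icc (hn : 1 ≤ n) (hT : IsSSYT lam K) (hK : IsKey lam K)
    {i : ℕ} (h1 : 1 ≤ i) (h2 : i ≤ n) : invKey lam K i ∈ Finset.Icc 1 n := by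
  have hu := le_upB (lam := lam) h2
  have hun := upB_le_n lam i
  have hd : downB lam i < i := downB_lt_self h1
  have hsub : Vset lam K (downB lam i) ⊆ Vset lam K (upB lam i) :=
    Vset_subset hT hK hn (downB_inChain lam i) (upB_inChain lam i) (by omega)
  have hcard : (Vset lam K (upB lam i) \ Vset lam K (downB lam i)).card
      = upB lam i - downB lam i := by
    rw [Finset.card_sdiff_of_subset hsub, card_Vset hT, card_Vset hT]
  rw [invKey, if_pos ⟨h1, h2⟩]
  have hmem := nth_mem (s := Vset lam K (upB lam i) \ Vset lam K (downB lam i))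
    (m := i - downB lam i - 1) (by omega)
  exact Vset_subset_Icc hT hun (Finset.sdiff_subset hmem)

lemma invKey_nperm (hn : 1 ≤ n) (hT : IsSSYT lam K) (hK : IsKey lam K) :
    IsNPerm n (invKey lam K) := by
  have himg : (Finset.Icc 1 n).image (invKey lam K) = Finset.Icc 1 n := by
    have := imageSet_invKey hn hT hK n (Or.inr (Or.inl rfl))
    rw [imageSet] at this
    rw [this, Vset_n hT]
  refine ⟨?_, ?_, ?_⟩
  · intro x hx
    have : invKey lam K x ∈ Finset.Icc 1 n := invKey_mem_Icc hn hT hK hx.1 hx.2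
    rw [Finset.mem_Icc] at this
    exact this
  · have : Set.InjOn (invKey lam K) ↑(Finset.Icc 1 n) :=
      Finset.injOn_of_card_image_eq (by rw [himg])
    rwa [Finset.coe_Icc] at this
  · intro y hy
    have hy' : y ∈ (Finset.Icc 1 n).image (invKey lam K) := by
      rw [himg]
      exact Finset.mem_Icc.2 ⟨hy.1, hy.2⟩
    obtain ⟨x, hx, he⟩ := Finset.mem_image.1 hy'
    rw [Finset.mem_Icc] at hx
    exact ⟨x, ⟨hx.1, hx.2⟩, he⟩

lemma invKey_block_mono (hn : 1 ≤ n) (hT : IsSSYT lam K) (hK : IsKey lam K) :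
    ∀ i j, 1 ≤ i → i < j → j ≤ n →
    (∀ q ∈ Qset lam, q < i ∨ j ≤ q) → invKey lam K i < invKey lam K j := by
  intro i j h1 hij hjn hQ
  have hin : i ≤ n := by omega
  have huc : upB lam i ∈ Qset lam ∨ upB lam i = n := by
    rcases upB_mem lam i with h | h
    · exact Or.inl h.1
    · exact Or.inr h
  have hiu : i ≤ upB lam i := le_upB hin
  have hun : upB lam i ≤ n := upB_le_n lam i
  have hdlt : downB lam (upB lam i) < i := by
    rcases downB_mem lam (upB lam i) with h | h
    · by_contra hc
      push_neg at hc
      have h3 := upB_le h.1 hc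
      have h4 := h.2
      omega
    · omega
  have hju : j ≤ upB lam i := by
    by_contra hc
    push_neg at hc
    rcases huc with hQ' | he
    · rcases hQ _ hQ' with h | h <;> omega
    · omega
  have hsub : Vset lam K (downB lam (upB lam i)) ⊆ Vset lam K (upB lam i) :=
    Vset_subset hT hK hn (downB_inChain lam (upB lam i)) (chain_of huc) (by omega)
  have hcard : (Vset lam K (upB lam i) \ Vset lam K (downB lam (upB lam i))).card
      = upB lam i - downB lam (upB lam i) := by
    rw [Finset.card_sdiff_of_subset hsub, card_Vset hT, card_Vset hT]
  rw [invKey_block huc hdlt hiu hun, invKey_block huc (by omega) hju hun]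
  exact nth_lt_nth (by omega) (by omega)

lemma keyTab_invKey (hn : 1 ≤ n) (hT : IsSSYT lam K) (hK : IsKey lam K)
    (hZ : ZeroOutside lam K) : keyTab lam (invKey lam K) = K := by
  funext j i
  by_cases hsh : InShape lam j i
  · have hj := hsh.1
    have hi := hsh.2.1
    have hiz : i ≤ zeta lam j := (inShape_iff lam hj hi).1 hsh
    have hjl : j ≤ lam.part 1 := inShape_j_le lam hsh
    have hQ : zeta lam j ∈ Qset lam := mem_Qset.2 ⟨j, hj, hjl, rfl⟩
    rw [keyTab_eq_nth hsh, imageSet_invKey hn hT hK (zeta lam j) (Or.inr (Or.inr hQ)),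
      Vset_zeta hT hK hj hjl, nth_colSet hT hj hi hiz]
  · rw [keyTab_zero hsh, hZ j i hsh]

lemma invKey_keyTab {p : ℕ → ℕ} (hn : 1 ≤ n) (hp : InSnLam lam p)
    (hnorm : ∀ t, t = 0 ∨ n < t → p t = t) : invKey lam (keyTab lam p) = p := by
  funext i
  by_cases hi : 1 ≤ i ∧ i ≤ n
  case neg =>
    rw [invKey, if_neg hi]
    exact (hnorm i (by omega)).symm
  obtain ⟨h1, h2⟩ := hi
  have hV : ∀ q, InChain lam q → Vset lam (keyTab lam p) q = imageSet p q := by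
    intro q hq
    by_cases hq' : q ∈ Qset lam
    · obtain ⟨hc1, hc2, hc3⟩ := colOf_spec hq'
      rw [Vset, if_pos hq', colSet_keyTab hp.1 hc1, hc3]
    · rcases hq with rfl | rfl | h
      · rw [Vset, if_neg hq']
        simp [imageSet]
      · rw [Vset, if_neg hq', imageSet_n hp.1]
      · exact absurd h hq'
  have hdlt : downB lam i < i := downB_lt_self h1
  have hiu : i ≤ upB lam i := le_upB h2
  have hun : upB lam i ≤ n := upB_le_n lam i
  rw [invKey, if_pos ⟨h1, h2⟩, hV (upB lam i) (upB_inChain lam i),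
    hV (downB lam i) (downB_inChain lam i)]
  set d := downB lam i with hdd
  set u := upB lam i with huu
  have hD : imageSet p u \ imageSet p d = (Finset.Ioc d u).image p := by
    ext x
    simp only [Finset.mem_sdiff, imageSet, Finset.mem_image, Finset.mem_Icc, Finset.mem_Ioc]
    constructor
    · rintro ⟨⟨a, ha, rfl⟩, hnot⟩
      refine ⟨a, ⟨?_, ha.2⟩, rfl⟩
      by_contra hc
      push_neg at hc
      exact hnot ⟨a, ⟨ha.1, hc⟩, rfl⟩
    · rintro ⟨a, ha, rfl⟩
      refine ⟨⟨a, ⟨by omega, ha.2⟩, rfl⟩, ?_⟩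
      rintro ⟨b, hb, he⟩
      have hba : b = a := hp.1.injOn ⟨hb.1, by omega⟩ ⟨by omega, by omega⟩ he
      omega
  rw [hD]
  have hmono : ∀ a ∈ Finset.Ioc d u, ∀ b ∈ Finset.Ioc d u, a < b → p a < p b := by
    intro a ha b hb hab
    rw [Finset.mem_Ioc] at ha hb
    refine hp.2 a b (by omega) hab (by omega) ?_
    intro q hq
    by_contra hc
    push_neg at hc
    obtain ⟨hqa, hqb⟩ := hc
    rcases lt_or_ge q i with h | h
    · have := le_downB hq h
      omega
    · have := upB_le hq h
      omega
  have hinj : Set.InjOn p ↑(Finset.Ioc d u) := by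
    refine hp.1.injOn.mono ?_
    intro x hx
    simp only [Finset.coe_Ioc, Set.mem_Ioc] at hx
    exact ⟨by omega, by omega⟩
  rw [nth_image_strictMonoOn hinj hmono (by rw [Nat.card_Ioc]; omega),
    nth_Ioc (by omega), show d + 1 + (i - d - 1) = i by omega]

end Chunk6


/-- `π ↦ Y_λ(π)` restricts to a bijection from `S_n^λ`
onto the set of all (semistandard) key tableaux of shape `λ`. -/
theorem keyTab_bijOn_SnLam (n : ℕ) (hn : 1 ≤ n) (lam : NPartition n) :
    Set.BijOn (fun p => keyTab lam p)
      {p : ℕ → ℕ | InSnLam lam p ∧ ∀ t, t = 0 ∨ n < t → p t = t}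
      {K : ℕ → ℕ → ℕ | IsSSYT lam K ∧ IsKey lam K ∧ ZeroOutside lam K} := by
  refine Set.InvOn.bijOn (f' := invKey lam) ⟨?_, ?_⟩ ?_ ?_
  · intro p hp
    exact invKey_keyTab hn hp.1 hp.2
  · intro K hK
    exact keyTab_invKey hn hK.1 hK.2.1 hK.2.2
  · intro p hp
    exact ⟨keyTab_ssyt hp.1.1, keyTab_isKey hp.1.1, keyTab_zeroOutside lam p⟩
  · intro K hK
    refine ⟨⟨invKey_nperm hn hK.1 hK.2.1, invKey_block_mono hn hK.1 hK.2.1⟩, ?_⟩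
    intro t ht
    rw [invKey, if_neg (by omega)]
end KeyPoly
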